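/- Let p₁, p₂ be real numbers with 0 < p₂ < p₁ < 1 and set ρ = log p₁ / log p₂. Let S be a finite set with |S| = n ≥ 1, let q : S → [0,1], and suppose S is partitioned into three sets A, B, C with q(y) ≤ p₁ for all y ∈ B and q(y) ≤ p₂ for all y ∈ C. Let N = |A| and assume 1 ≤ N ≤ n, and set k* = ⌈log(n/N) / log(1/p₂)⌉. Then (1/p₁^{k*})·(1 + Σ_{y ∈ S} q(y)^{k*}) ≤ (1/p₁)·(n/N)^ρ·(1 + 2N) + |B|. -/

import Mathlib

/-- Choosing the level `k* = ⌈log(n/N) / log(1/p₂)⌉`, based only on the output size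
`N = |A|`, the expected work `(1/p₁^{k*})·(1 + ∑_{y ∈ S} q(y)^{k*})` is at most
`(1/p₁)·(n/N)^ρ·(1 + 2N) + |B|`, where `S` is partitioned into near points `A`,
`c`-near points `B` (with `q(y) ≤ p₁`) and far points `C` (with `q(y) ≤ p₂`), and
`ρ = log p₁ / log p₂`. -/
theorem output_sensitive_level_bound {α : Type*} [DecidableEq α]
    (p₁ p₂ : ℝ) (hp₂ : 0 < p₂) (hp₁₂ : p₂ < p₁) (hp₁ : p₁ < 1)
    (ρ : ℝ) (hρ : ρ = Real.log p₁ / Real.log p₂)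
    (S A B C : Finset α) (q : α → ℝ)
    (hq0 : ∀ y ∈ S, 0 ≤ q y) (hq1 : ∀ y ∈ S, q y ≤ 1)
    (hpart : A ∪ B ∪ C = S)
    (hAB : Disjoint A B) (hAC : Disjoint A C) (hBC : Disjoint B C)
    (hB : ∀ y ∈ B, q y ≤ p₁) (hC : ∀ y ∈ C, q y ≤ p₂)
    (hA : 1 ≤ A.card) (hAS : A.card ≤ S.card)
    (k : ℕ)
    (hk : k = ⌈Real.log ((S.card : ℝ) / (A.card : ℝ)) / Real.log (1 / p₂)⌉₊) :
    (1 / p₁ ^ k) * (1 + ∑ y ∈ S, q y ^ k) ≤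
      (1 / p₁) * ((S.card : ℝ) / (A.card : ℝ)) ^ ρ * (1 + 2 * (A.card : ℝ))
        + (B.card : ℝ) := by
  have hp₁0 : 0 < p₁ := hp₂.trans hp₁₂
  have hp₂1 : p₂ < 1 := hp₁₂.trans hp₁
  set n : ℝ := (S.card : ℝ) with hn
  set N : ℝ := (A.card : ℝ) with hN
  have hN1 : (1:ℝ) ≤ N := by rw [hN]; exact_mod_cast hA
  have hN0 : (0:ℝ) < N := lt_of_lt_of_le one_pos hN1
  have hnN : N ≤ n := by rw [hN, hn]; exact_mod_cast hAS
  have hn0 : (0:ℝ) < n := lt_of_lt_of_le hN0 hnN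
  have hratio1 : (1:ℝ) ≤ n / N := (one_le_div hN0).mpr hnN
  have hratio0 : (0:ℝ) < n / N := div_pos hn0 hN0
  have hlp₂ : Real.log p₂ < 0 := Real.log_neg hp₂ hp₂1
  have hl2 : 0 < Real.log (1/p₂) := by
    rw [Real.log_div one_ne_zero (ne_of_gt hp₂), Real.log_one]; linarith
  have hlognN : 0 ≤ Real.log (n / N) := Real.log_nonneg hratio1
  have hp₁k0 : (0:ℝ) < p₁ ^ k := pow_pos hp₁0 k
  have hp₂k0 : (0:ℝ) < p₂ ^ k := pow_pos hp₂ k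
  -- k bounds
  have hkx : Real.log (n/N) / Real.log (1/p₂) ≤ (k:ℝ) := hk ▸ Nat.le_ceil _
  have hkx1 : (k:ℝ) ≤ Real.log (n/N) / Real.log (1/p₂) + 1 := by
    rw [hk]; exact le_of_lt (Nat.ceil_lt_add_one (div_nonneg hlognN hl2.le))
  -- key 1 : n * p₂^k ≤ N
  have hkey : n * p₂ ^ k ≤ N := by
    have h1 : Real.log (n/N) ≤ (k:ℝ) * Real.log (1/p₂) := (div_le_iff₀ hl2).mp hkx
    have h2 : Real.log (n/N) ≤ Real.log ((1/p₂) ^ k) := by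
      rw [Real.log_pow]; exact h1
    have h3 : n / N ≤ (1/p₂) ^ k :=
      (Real.log_le_log_iff hratio0 (pow_pos (by positivity) k)).mp h2
    rw [div_pow, one_pow] at h3
    rw [div_le_div_iff₀ hN0 hp₂k0] at h3
    linarith
  -- key 2 : 1 / p₁^k ≤ (1/p₁) * (n/N)^ρ
  have hkey2 : 1 / p₁ ^ k ≤ (1 / p₁) * (n / N) ^ ρ := by
    have honediv : (1:ℝ) ≤ 1 / p₁ := by rw [le_div_iff₀ hp₁0]; linarith
    have e1 : (1 / p₁) ^ (k:ℝ) = 1 / p₁ ^ k := by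
      rw [Real.rpow_natCast, one_div, one_div, inv_pow]
    have e2 : (1 / p₁ : ℝ) ^ ((Real.log (n/N) / Real.log (1/p₂)) + 1)
        = (n / N) ^ ρ * (1 / p₁) := by
      rw [Real.rpow_add (by positivity), Real.rpow_one]
      congr 1
      rw [Real.rpow_def_of_pos (by positivity), Real.rpow_def_of_pos hratio0]
      congr 1
      rw [Real.log_div one_ne_zero (ne_of_gt hp₁0), Real.log_one,
        Real.log_div one_ne_zero (ne_of_gt hp₂), Real.log_one, hρ]
      field_simp
      ring
    calc 1 / p₁ ^ k = (1 / p₁) ^ (k:ℝ) := e1.symm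
      _ ≤ (1 / p₁ : ℝ) ^ ((Real.log (n/N) / Real.log (1/p₂)) + 1) :=
          Real.rpow_le_rpow_of_exponent_le honediv hkx1
      _ = (n / N) ^ ρ * (1 / p₁) := e2
      _ = (1 / p₁) * (n / N) ^ ρ := by ring
  -- subset facts
  have hdisj : Disjoint (A ∪ B) C := Finset.disjoint_union_left.mpr ⟨hAC, hBC⟩
  have hAsub : A ⊆ S := hpart ▸ (Finset.subset_union_left.trans Finset.subset_union_left)
  have hBsub : B ⊆ S := hpart ▸ (Finset.subset_union_right.trans Finset.subset_union_left)
  have hCsub : C ⊆ S := hpart ▸ Finset.subset_union_right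
  -- sum bound
  have hsum : ∑ y ∈ S, q y ^ k ≤ N + (B.card : ℝ) * p₁ ^ k + n * p₂ ^ k := by
    rw [← hpart, Finset.sum_union hdisj, Finset.sum_union hAB]
    have hsA : ∑ y ∈ A, q y ^ k ≤ N := by
      calc ∑ y ∈ A, q y ^ k ≤ ∑ _y ∈ A, (1:ℝ) :=
            Finset.sum_le_sum fun y hy =>
              pow_le_one₀ (hq0 y (hAsub hy)) (hq1 y (hAsub hy))
        _ = N := by simp [hN]
    have hsB : ∑ y ∈ B, q y ^ k ≤ (B.card : ℝ) * p₁ ^ k := by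
      calc ∑ y ∈ B, q y ^ k ≤ ∑ _y ∈ B, p₁ ^ k :=
            Finset.sum_le_sum fun y hy =>
              pow_le_pow_left₀ (hq0 y (hBsub hy)) (hB y hy) k
        _ = (B.card : ℝ) * p₁ ^ k := by simp [mul_comm]
    have hsC : ∑ y ∈ C, q y ^ k ≤ n * p₂ ^ k := by
      calc ∑ y ∈ C, q y ^ k ≤ ∑ _y ∈ C, p₂ ^ k :=
            Finset.sum_le_sum fun y hy =>
              pow_le_pow_left₀ (hq0 y (hCsub hy)) (hC y hy) k
        _ = (C.card : ℝ) * p₂ ^ k := by simp [mul_comm]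
        _ ≤ n * p₂ ^ k := by
            have : (C.card : ℝ) ≤ n := by
              rw [hn]; exact_mod_cast Finset.card_le_card hCsub
            exact mul_le_mul_of_nonneg_right this hp₂k0.le
    linarith
  -- assemble
  have hstep1 : (1 / p₁ ^ k) * (1 + ∑ y ∈ S, q y ^ k)
      ≤ (1 / p₁ ^ k) * (1 + (N + (B.card : ℝ) * p₁ ^ k + N)) := by
    apply mul_le_mul_of_nonneg_left _ (by positivity)
    linarith
  have hstep2 : (1 / p₁ ^ k) * (1 + (N + (B.card : ℝ) * p₁ ^ k + N))
      = (1 + 2 * N) * (1 / p₁ ^ k) + (B.card : ℝ) := by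
    field_simp
    ring
  have hstep3 : (1 + 2 * N) * (1 / p₁ ^ k) ≤ (1 + 2 * N) * ((1 / p₁) * (n / N) ^ ρ) :=
    mul_le_mul_of_nonneg_left hkey2 (by linarith)
  calc (1 / p₁ ^ k) * (1 + ∑ y ∈ S, q y ^ k)
      ≤ (1 + 2 * N) * (1 / p₁ ^ k) + (B.card : ℝ) := by rw [← hstep2]; exact hstep1
    _ ≤ (1 + 2 * N) * ((1 / p₁) * (n / N) ^ ρ) + (B.card : ℝ) := by linarith
    _ = (1 / p₁) * (n / N) ^ ρ * (1 + 2 * N) + (B.card : ℝ) := by ring
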